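/- arXiv:1606.04040 — 2 statements merged into one kernel-verified Lean document; each statement's English description precedes it below -/
import Mathlib

section
/- Let F_q be a finite field of odd characteristic. Define σ : F_q^d → ℝ by σ(y) = q if |y|² = 0 and σ(y) = 0 otherwise. Then for every ξ ∈ F_q^d, |σ̂(ξ) − δ(ξ)| ≤ q^{1−d/2}, where δ(ξ) = 1 if ξ = 0 and 0 otherwise. -/
open Matrix Finset
open scoped Classical

lemma vec_char_sum {F : Type*} [Field F] [Fintype F] (χ : AddChar F ℂ) (hχ : χ ≠ 1)
    (d : ℕ) (v : Fin d → F) :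
    ∑ x : Fin d → F, χ (v ⬝ᵥ x) = if v = 0 then ((Fintype.card F : ℂ)) ^ d else 0 := by
  split_ifs with hv
  · subst hv
    simp only [zero_dotProduct, AddChar.map_zero_eq_one, Finset.sum_const, Finset.card_univ]
    rw [Fintype.card_fun]
    push_cast
    simp
  · set L : (Fin d → F) →+ F := AddMonoidHom.mk' (fun x => v ⬝ᵥ x)
      (fun a b => dotProduct_add v a b) with hL
    set ψ : AddChar (Fin d → F) ℂ := χ.compAddMonoidHom L with hψ
    have hne : ψ ≠ 1 := by
      obtain ⟨i, hi⟩ := Function.ne_iff.mp hv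
      have hprim := AddChar.IsPrimitive.of_ne_one hχ (a := v i) hi
      obtain ⟨a, ha⟩ := AddChar.ne_one_iff.mp hprim
      rw [AddChar.mulShift_apply] at ha
      refine AddChar.ne_one_iff.mpr ⟨Pi.single i a, ?_⟩
      simpa [hψ, hL, dotProduct_single] using ha
    have := AddChar.sum_eq_zero_of_ne_one hne
    simpa [hψ, hL] using this

lemma gauss_like {F : Type*} [Field F] [Fintype F] (hodd : ringChar F ≠ 2)
    (χ : AddChar F ℂ) (hχ : χ ≠ 1) (d : ℕ) (ξ : Fin d → F) {t : F} (ht : t ≠ 0) :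
    (∑ x : Fin d → F, χ (t * (x ⬝ᵥ x) - ξ ⬝ᵥ x)) *
      (starRingEnd ℂ) (∑ x : Fin d → F, χ (t * (x ⬝ᵥ x) - ξ ⬝ᵥ x)) =
      ((Fintype.card F : ℂ)) ^ d := by
  have h2t : (2 : F) * t ≠ 0 := mul_ne_zero (Ring.two_ne_zero hodd) ht
  rw [map_sum]
  have hconj : ∀ y : Fin d → F, (starRingEnd ℂ) (χ (t * (y ⬝ᵥ y) - ξ ⬝ᵥ y))
      = χ (-(t * (y ⬝ᵥ y) - ξ ⬝ᵥ y)) := fun y => (AddChar.map_neg_eq_conj χ _).symm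
  simp_rw [hconj]
  rw [Finset.sum_mul_sum]
  simp_rw [← AddChar.map_add_eq_mul]
  rw [Finset.sum_comm]
  have key : ∀ y : Fin d → F,
      ∑ x : Fin d → F, χ (t * (x ⬝ᵥ x) - ξ ⬝ᵥ x + -(t * (y ⬝ᵥ y) - ξ ⬝ᵥ y))
      = ∑ u : Fin d → F, χ ((t * (u ⬝ᵥ u) - ξ ⬝ᵥ u) + ((2 * t) • u) ⬝ᵥ y) := by
    intro y
    refine (Fintype.sum_equiv (Equiv.addLeft y) _ _ fun u => ?_).symm
    congr 1
    simp only [Equiv.coe_addLeft, dotProduct_add, add_dotProduct, smul_dotProduct,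
      smul_eq_mul]
    rw [dotProduct_comm u y]
    ring
  simp_rw [key]
  rw [Finset.sum_comm]
  simp_rw [AddChar.map_add_eq_mul, ← Finset.mul_sum, vec_char_sum χ hχ d,
    smul_eq_zero, h2t, false_or]
  rw [Finset.sum_eq_single_of_mem 0 (Finset.mem_univ 0)]
  · simp
  · intro u _ hu
    simp [hu]

/-- Fourier asymptotic for the sphere of radius zero: with `σ = q·1[|y|² = 0]`,
`|σ̂(ξ) - δ(ξ)| ≤ q^{1 - d/2}`. -/
theorem zero_sphere_fourier_decay {F : Type*} [Field F] [Fintype F]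
    (hodd : ringChar F ≠ 2) (χ : AddChar F ℂ) (hχ : χ ≠ 1)
    (d : ℕ) (ξ : Fin d → F) :
    ‖(∑ x : Fin d → F,
          (if x ⬝ᵥ x = 0 then (Fintype.card F : ℂ) else 0) * χ (-(ξ ⬝ᵥ x))) /
            (Fintype.card F : ℂ) ^ d -
        (if ξ = 0 then 1 else 0)‖ ≤
      (Fintype.card F : ℝ) ^ ((1 : ℝ) - (d : ℝ) / 2) := by
  set q : ℕ := Fintype.card F with hq
  have hq0 : 0 < q := Fintype.card_pos
  have hQ : (0:ℝ) < (q:ℝ) := by exact_mod_cast hq0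
  have hqC : ((q:ℂ))^d ≠ 0 := pow_ne_zero _ (by exact_mod_cast hq0.ne')
  set S : F → ℂ := fun t => ∑ x : Fin d → F, χ (t * (x ⬝ᵥ x) - ξ ⬝ᵥ x) with hS
  have hnum : (∑ x : Fin d → F, (if x ⬝ᵥ x = 0 then (q : ℂ) else 0) * χ (-(ξ ⬝ᵥ x)))
      = ∑ t : F, S t := by
    have hprim := AddChar.IsPrimitive.of_ne_one hχ
    have h1 : ∀ x : Fin d → F, (if x ⬝ᵥ x = 0 then (q : ℂ) else 0)
        = ∑ t : F, χ (t * (x ⬝ᵥ x)) := fun x => by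
      rw [AddChar.sum_mulShift _ hprim]
      split_ifs <;> simp [hq]
    simp_rw [h1, Finset.sum_mul]
    rw [Finset.sum_comm]
    refine Finset.sum_congr rfl fun t _ => Finset.sum_congr rfl fun x _ => ?_
    rw [← AddChar.map_add_eq_mul]
    congr 1
    ring
  have hS0 : S 0 = (if ξ = 0 then ((q:ℂ))^d else 0) := by
    have h := vec_char_sum χ hχ d (-ξ)
    simp only [neg_dotProduct, neg_eq_zero] at h
    simpa [hS] using h
  have hnorm : ∀ t : F, t ≠ 0 → ‖S t‖ = Real.sqrt ((q:ℝ)^d) := by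
    intro t ht
    have hst := gauss_like hodd χ hχ d ξ ht
    rw [RCLike.mul_conj] at hst
    have : (‖S t‖^2 : ℝ) = ((q:ℝ)^d) := by
      apply Complex.ofReal_injective
      push_cast at hst ⊢
      exact hst
    rw [← Real.sqrt_sq (norm_nonneg (S t)), this]
  have key : (∑ t : F, S t)/((q:ℂ))^d - (if ξ = 0 then (1:ℂ) else 0)
      = (∑ t ∈ Finset.univ \ {0}, S t)/((q:ℂ))^d := by
    rw [Finset.sum_eq_sum_sdiff_singleton_add (Finset.mem_univ (0:F)), hS0]
    split_ifs <;> field_simp <;> ring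
  rw [hnum, key, norm_div, norm_pow, Complex.norm_natCast]
  have hbound : ‖∑ t ∈ Finset.univ \ {0}, S t‖ ≤ (q:ℝ) * Real.sqrt ((q:ℝ)^d) := by
    calc ‖∑ t ∈ Finset.univ \ {0}, S t‖ ≤ ∑ t ∈ Finset.univ \ {0}, ‖S t‖ :=
          norm_sum_le _ _
      _ = ∑ _t ∈ (Finset.univ \ {0} : Finset F), Real.sqrt ((q:ℝ)^d) := by
          refine Finset.sum_congr rfl fun t ht => ?_
          exact hnorm t (by simpa using (Finset.mem_sdiff.mp ht).2)
      _ = ((Finset.univ \ {0} : Finset F).card : ℝ) * Real.sqrt ((q:ℝ)^d) := by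
          rw [Finset.sum_const, nsmul_eq_mul]
      _ ≤ (q:ℝ) * Real.sqrt ((q:ℝ)^d) := by
          have : ((Finset.univ \ {0} : Finset F).card : ℝ) ≤ (q:ℝ) := by
            have := Finset.card_le_card (Finset.sdiff_subset (s := (Finset.univ : Finset F))
              (t := {0}))
            simp only [Finset.card_univ] at this
            exact_mod_cast this
          exact mul_le_mul_of_nonneg_right this (Real.sqrt_nonneg _)
  have hsq : Real.sqrt ((q:ℝ)^d) = (q:ℝ) ^ ((d:ℝ)/2) := by
    rw [← Real.rpow_natCast (q:ℝ) d, Real.sqrt_eq_rpow, ← Real.rpow_mul hQ.le]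
    ring_nf
  have h1' : (q:ℝ) * (q:ℝ)^((d:ℝ)/2) = (q:ℝ)^((1:ℝ) + (d:ℝ)/2) := by
    rw [Real.rpow_add hQ, Real.rpow_one]
  have h2' : (q:ℝ)^((1:ℝ) - (d:ℝ)/2) * (q:ℝ)^((d:ℝ)) = (q:ℝ)^((1:ℝ) + (d:ℝ)/2) := by
    rw [← Real.rpow_add hQ]
    congr 1
    ring
  calc ‖∑ t ∈ Finset.univ \ {0}, S t‖ / (q:ℝ)^d
      ≤ ((q:ℝ) * Real.sqrt ((q:ℝ)^d)) / (q:ℝ)^d := by gcongr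
    _ ≤ (q:ℝ) ^ ((1:ℝ) - (d:ℝ)/2) := by
        rw [hsq, div_le_iff₀ (by positivity), ← Real.rpow_natCast (q:ℝ) d, h1', h2']
end

section
/- Let F_q be a finite field of odd characteristic and let y_1,…,y_{j−1} ∈ F_q^d be linearly independent with V = Span(y_1,…,y_{j−1}). Fix c_1,…,c_{j−1}, t ∈ F_q and suppose there exists z ∈ F_q^d with y_i·z = c_i for all i. Then for every ξ ∈ F_q^d and s ∈ F_q^*, |Σ_{x ∈ V^⊥} χ(s|x|² + ξ·x)|² ≤ q^{d−j+1}·|V ∩ V^⊥|. -/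
open Matrix Finset
open scoped Classical

/-- The orthogonal complement of a subspace of `F^d` with respect to the
standard dot product. -/
def perp {F : Type*} [Field F] {d : ℕ} (V : Submodule F (Fin d → F)) :
    Submodule F (Fin d → F) where
  carrier := {w | ∀ v ∈ V, v ⬝ᵥ w = 0}
  add_mem' := by
    intro a b ha hb v hv
    simp [dotProduct_add, ha v hv, hb v hv]
  zero_mem' := by
    intro v hv
    simp
  smul_mem' := by
    intro c a ha v hv
    simp [dotProduct_smul, ha v hv]

/-- The standard dot product as a bilinear form on `F^d`. -/
def dotBilin (F : Type*) [Field F] (d : ℕ) : LinearMap.BilinForm F (Fin d → F) :=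
  LinearMap.mk₂ F (· ⬝ᵥ ·)
    (fun a b c => add_dotProduct a b c)
    (fun r a b => by simp [smul_dotProduct, smul_eq_mul])
    (fun a b c => dotProduct_add a b c)
    (fun r a b => by simp [dotProduct_smul, smul_eq_mul])

lemma dotBilin_apply {F : Type*} [Field F] {d : ℕ} (v w : Fin d → F) :
    dotBilin F d v w = v ⬝ᵥ w := rfl

lemma dotBilin_isRefl (F : Type*) [Field F] (d : ℕ) : (dotBilin F d).IsRefl := by
  intro v w h
  show w ⬝ᵥ v = 0
  rw [dotProduct_comm]
  exact h

lemma dotBilin_nondeg (F : Type*) [Field F] (d : ℕ) : (dotBilin F d).Nondegenerate := by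
  constructor
  intro v h
  funext i
  simpa [dotBilin_apply] using h (Pi.single i 1)
  intro v h
  funext i
  simpa [dotBilin_apply] using h (Pi.single i 1)

lemma perp_eq_orthogonal {F : Type*} [Field F] {d : ℕ} (V : Submodule F (Fin d → F)) :
    perp V = (dotBilin F d).orthogonal V := rfl

/-- Weyl differencing bound: for linearly independent `y_1, …, y_{j-1}`
spanning `V`, a nonzero `s` and any `ξ`,
`|∑_{x ∈ V^⊥} χ(s|x|² + ξ·x)|² ≤ q^{d-j+1} |V ∩ V^⊥|`. -/
theorem weyl_differencing_bound {F : Type*} [Field F] [Fintype F]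
    (hodd : ringChar F ≠ 2) (χ : AddChar F ℂ) (hχ : χ ≠ 1)
    {d j : ℕ} (hj : 2 ≤ j)
    (y : Fin (j - 1) → (Fin d → F)) (hy : LinearIndependent F y)
    (c : Fin (j - 1) → F) (t : F)
    (hz : ∃ z : Fin d → F, ∀ i, y i ⬝ᵥ z = c i)
    (ξ : Fin d → F) (s : F) (hs : s ≠ 0) :
    ‖∑ x : ↥(perp (Submodule.span F (Set.range y))),
        χ (s * ((x : Fin d → F) ⬝ᵥ (x : Fin d → F)) + ξ ⬝ᵥ (x : Fin d → F))‖ ^ 2 ≤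
      (Fintype.card F : ℝ) ^ (d + 1 - j) *
        Nat.card ↥(Submodule.span F (Set.range y) ⊓
          perp (Submodule.span F (Set.range y))) := by
  classical
  set V := Submodule.span F (Set.range y) with hVdef
  set W := perp V with hWdef
  set f : (Fin d → F) → F := fun x => s * (x ⬝ᵥ x) + ξ ⬝ᵥ x with hf
  set S : ℂ := ∑ x : ↥W, χ (f x) with hS
  have htwo : (2 : F) ≠ 0 := Ring.two_ne_zero hodd
  -- dimension of V
  have hjd : j - 1 ≤ d := by
    have := hy.fintype_card_le_finrank
    simpa [Module.finrank_fin_fun] using this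
  have hfinV : Module.finrank F V = j - 1 := by
    rw [hVdef, finrank_span_eq_card hy, Fintype.card_fin]
  -- cardinality of W
  have hcardW : Fintype.card ↥W = Fintype.card F ^ (d + 1 - j) := by
    have h1 : Module.finrank F ↥W = d - (j - 1) := by
      rw [hWdef, perp_eq_orthogonal,
        LinearMap.BilinForm.finrank_orthogonal (dotBilin_nondeg F d),
        hfinV, Module.finrank_fin_fun]
    have h2 : d - (j - 1) = d + 1 - j := by omega
    rw [Module.card_eq_pow_finrank (K := F) (V := ↥W), h1, h2]
  -- double orthogonal
  have hdouble : (dotBilin F d).orthogonal W = V := by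
    rw [hWdef, perp_eq_orthogonal,
      LinearMap.BilinForm.orthogonal_orthogonal (dotBilin_nondeg F d) (dotBilin_isRefl F d)]
  -- conjugate of S
  have hconj : (starRingEnd ℂ) S = ∑ x : ↥W, χ (-(f x)) := by
    rw [hS, map_sum]
    refine Finset.sum_congr rfl fun x _ => ?_
    have h1 : χ (-(f ↑x)) = (χ (f ↑x))⁻¹ := AddChar.map_neg_eq_inv χ (f ↑x)
    rw [h1, Complex.inv_eq_conj (χ.norm_apply _)]
  -- the inner character sum
  set T : ↥W → ℂ := fun h => ∑ x : ↥W, χ ((2 * s) * ((h : Fin d → F) ⬝ᵥ (x : Fin d → F))) with hT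
  have hTval : ∀ h : ↥W, T h = if (h : Fin d → F) ∈ V then (Fintype.card ↥W : ℂ) else 0 := by
    intro h
    -- the additive character x ↦ χ(2s ⟨h, x⟩) on W
    set g : ↥W →+ F :=
      { toFun := fun x => (2 * s) * ((h : Fin d → F) ⬝ᵥ (x : Fin d → F))
        map_zero' := by simp
        map_add' := by intro a b; simp [dotProduct_add, mul_add] } with hg
    set ψ : AddChar ↥W ℂ := χ.compAddMonoidHom g with hψ
    have hψ0 : ψ = 0 ↔ (h : Fin d → F) ∈ V := by
      rw [← hdouble]
      constructor
      · intro h0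
        rw [AddChar.eq_zero_iff] at h0
        intro x hx
        by_contra hne
        -- h ⬝ x ≠ 0 for some x ∈ W; scale to hit a point where χ ≠ 1
        obtain ⟨b, hb⟩ := AddChar.ne_one_iff.1 hχ
        have hne' : x ⬝ᵥ (h : Fin d → F) ≠ 0 := hne
        have ha : (2 * s) * ((h : Fin d → F) ⬝ᵥ x) ≠ 0 := by
          rw [dotProduct_comm]
          exact mul_ne_zero (mul_ne_zero htwo hs) hne'
        set u : F := b * ((2 * s) * ((h : Fin d → F) ⬝ᵥ x))⁻¹ with hu
        have hval : g (u • (⟨x, hx⟩ : ↥W)) = b := by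
          show (2 * s) * ((h : Fin d → F) ⬝ᵥ (u • x)) = b
          rw [dotProduct_smul, smul_eq_mul, hu]
          have hd : (h : Fin d → F) ⬝ᵥ x ≠ 0 := right_ne_zero_of_mul ha
          field_simp
        have h2 := h0 (u • (⟨x, hx⟩ : ↥W))
        rw [hψ, AddChar.compAddMonoidHom_apply, hval] at h2
        exact hb h2
      · intro hmem
        rw [AddChar.eq_zero_iff]
        intro x
        rw [hψ, AddChar.compAddMonoidHom_apply]
        show χ ((2 * s) * ((h : Fin d → F) ⬝ᵥ (x : Fin d → F))) = 1
        have h4 : (x : Fin d → F) ⬝ᵥ (h : Fin d → F) = 0 := hmem (x : Fin d → F) x.2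
        have h3 : (2 * s) * ((h : Fin d → F) ⬝ᵥ (x : Fin d → F)) = 0 := by
          rw [dotProduct_comm, h4, mul_zero]
        rw [h3, AddChar.map_zero_eq_one]
    have hTψ : T h = ∑ x : ↥W, ψ x := rfl
    rw [hTψ, AddChar.sum_eq_ite]
    by_cases hhv : (h : Fin d → F) ∈ V
    · rw [if_pos (hψ0.2 hhv), if_pos hhv]
    · rw [if_neg (fun hh => hhv (hψ0.1 hh)), if_neg hhv]
  -- Weyl differencing identity
  have hkey : S * (starRingEnd ℂ) S =
      ∑ h : ↥W, χ (s * ((h : Fin d → F) ⬝ᵥ (h : Fin d → F)) + ξ ⬝ᵥ (h : Fin d → F)) * T h := by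
    rw [hconj, hS, Finset.sum_mul_sum, Finset.sum_comm]
    have hre : ∀ x' : ↥W, (∑ x : ↥W, χ (f ↑x) * χ (-(f ↑x'))) =
        ∑ h : ↥W, χ (s * ((h : Fin d → F) ⬝ᵥ (h : Fin d → F)) + ξ ⬝ᵥ (h : Fin d → F)) *
          χ ((2 * s) * ((h : Fin d → F) ⬝ᵥ (x' : Fin d → F))) := by
      intro x'
      refine (Fintype.sum_equiv (Equiv.addLeft x')
        (fun h => χ (s * ((h : Fin d → F) ⬝ᵥ (h : Fin d → F)) + ξ ⬝ᵥ (h : Fin d → F)) *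
          χ ((2 * s) * ((h : Fin d → F) ⬝ᵥ (x' : Fin d → F))))
        (fun x => χ (f ↑x) * χ (-(f ↑x'))) (fun h => ?_)).symm
      show χ (s * ((h : Fin d → F) ⬝ᵥ (h : Fin d → F)) + ξ ⬝ᵥ (h : Fin d → F)) *
          χ ((2 * s) * ((h : Fin d → F) ⬝ᵥ (x' : Fin d → F))) =
        χ (f ((x' : Fin d → F) + (h : Fin d → F))) * χ (-(f ↑x'))
      rw [← AddChar.map_add_eq_mul, ← AddChar.map_add_eq_mul]
      congr 1
      have expand : ((x' : Fin d → F) + (h : Fin d → F)) ⬝ᵥ ((x' : Fin d → F) + (h : Fin d → F)) =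
          (x' : Fin d → F) ⬝ᵥ (x' : Fin d → F) + 2 * ((h : Fin d → F) ⬝ᵥ (x' : Fin d → F)) +
            (h : Fin d → F) ⬝ᵥ (h : Fin d → F) := by
        rw [dotProduct_add, add_dotProduct, add_dotProduct,
          dotProduct_comm (x' : Fin d → F) (h : Fin d → F)]
        ring
      rw [hf]
      simp only [expand, dotProduct_add]
      ring
    calc (∑ x' : ↥W, ∑ x : ↥W, χ (f ↑x) * χ (-(f ↑x')))
        = ∑ x' : ↥W, ∑ h : ↥W,
            χ (s * ((h : Fin d → F) ⬝ᵥ (h : Fin d → F)) + ξ ⬝ᵥ (h : Fin d → F)) *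
              χ ((2 * s) * ((h : Fin d → F) ⬝ᵥ (x' : Fin d → F))) :=
          Finset.sum_congr rfl fun x' _ => hre x'
      _ = ∑ h : ↥W, ∑ x' : ↥W,
            χ (s * ((h : Fin d → F) ⬝ᵥ (h : Fin d → F)) + ξ ⬝ᵥ (h : Fin d → F)) *
              χ ((2 * s) * ((h : Fin d → F) ⬝ᵥ (x' : Fin d → F))) := Finset.sum_comm
      _ = ∑ h : ↥W, χ (s * ((h : Fin d → F) ⬝ᵥ (h : Fin d → F)) + ξ ⬝ᵥ (h : Fin d → F)) * T h := by
          refine Finset.sum_congr rfl fun h _ => ?_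
          rw [hT, Finset.mul_sum]
  -- norms
  have hnorm1 : ∀ a : F, ‖χ a‖ = 1 := fun a => χ.norm_apply a
  have hfinal : ‖S‖ ^ 2 = ‖S * (starRingEnd ℂ) S‖ := by
    rw [norm_mul, RCLike.norm_conj, sq]
  rw [hfinal, hkey]
  calc ‖∑ h : ↥W, χ (s * ((h : Fin d → F) ⬝ᵥ (h : Fin d → F)) + ξ ⬝ᵥ (h : Fin d → F)) * T h‖
      ≤ ∑ h : ↥W, ‖χ (s * ((h : Fin d → F) ⬝ᵥ (h : Fin d → F)) + ξ ⬝ᵥ (h : Fin d → F)) * T h‖ :=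
        norm_sum_le _ _
    _ = ∑ h : ↥W, ‖T h‖ := by
        refine Finset.sum_congr rfl fun h _ => ?_
        rw [norm_mul, hnorm1, one_mul]
    _ = ∑ h : ↥W, (if (h : Fin d → F) ∈ V then (Fintype.card ↥W : ℝ) else 0) := by
        refine Finset.sum_congr rfl fun h _ => ?_
        rw [hTval h]
        split_ifs
        · simp
        · simp
    _ = (Finset.univ.filter (fun h : ↥W => (h : Fin d → F) ∈ V)).card •
          (Fintype.card ↥W : ℝ) := by
        rw [Finset.sum_ite, Finset.sum_const, Finset.sum_const_zero, add_zero]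
    _ = (Fintype.card ↥W : ℝ) * (Finset.univ.filter (fun h : ↥W => (h : Fin d → F) ∈ V)).card := by
        rw [nsmul_eq_mul, mul_comm]
    _ ≤ (Fintype.card F : ℝ) ^ (d + 1 - j) * Nat.card ↥(V ⊓ W) := by
        have hc1 : (Finset.univ.filter (fun h : ↥W => (h : Fin d → F) ∈ V)).card =
            Nat.card ↥(V ⊓ W) := by
          have e : {h : ↥W // (h : Fin d → F) ∈ V} ≃ ↥(V ⊓ W) :=
            { toFun := fun h => ⟨(h.1 : Fin d → F), ⟨h.2, h.1.2⟩⟩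
              invFun := fun g => ⟨⟨(g : Fin d → F), g.2.2⟩, g.2.1⟩
              left_inv := fun h => rfl
              right_inv := fun g => rfl }
          rw [← Fintype.card_subtype, Fintype.card_congr e, Nat.card_eq_fintype_card]
        rw [hc1, hcardW]
        push_cast
        exact le_refl _
end
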